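/- Let W ⊆ ℝ^p be convex, γ > 0, and let f₁,...,fₙ, f'_i : W → ℝ≥0 be convex, L-smooth, non-negative functions bounded above by M, where the collection {f'_j} equals {f_j} except at a single index i where f_i is replaced by f'_i. Let r : W → ℝ be convex. Let w* minimize R(w) + (γ/2)‖w - w₀‖² and w'* minimize R'(w) + (γ/2)‖w - w₀'‖² over W, where R(w) = (1/n)Σⱼ fⱼ(w) + r(w) and R'(w) = (1/n)Σⱼ f'ⱼ(w) + r(w). Then ‖w* - w'*‖ ≤ ‖w₀ - w₀'‖ + 4√(2LM)/(nγ). -/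

import Mathlib

open RealInnerProductSpace

/-- `g` is `L`-smooth: differentiable with the quadratic upper/lower bound. -/
def LSmooth {p : ℕ} (L : ℝ) (g : EuclideanSpace ℝ (Fin p) → ℝ) : Prop :=
  Differentiable ℝ g ∧
    ∀ w w', |g w - g w' - ⟪gradient g w, w - w'⟫| ≤ L / 2 * ‖w - w'‖ ^ 2

lemma grad_norm_eq {p : ℕ} (g : EuclideanSpace ℝ (Fin p) → ℝ) (x : EuclideanSpace ℝ (Fin p)) :
    ‖gradient g x‖ = ‖fderiv ℝ g x‖ := by
  rw [gradient]
  exact (InnerProductSpace.toDual ℝ _).symm.norm_map _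

lemma grad_bound {p : ℕ} {L M : ℝ} (hL : 0 < L) (g : EuclideanSpace ℝ (Fin p) → ℝ)
    (hsm : LSmooth L g) (hbd : ∀ w, 0 ≤ g w ∧ g w ≤ M) (x : EuclideanSpace ℝ (Fin p)) :
    ‖gradient g x‖ ≤ Real.sqrt (2 * L * M) := by
  have key := (hsm.2 x (x - L⁻¹ • gradient g x))
  have hx : x - (x - L⁻¹ • gradient g x) = L⁻¹ • gradient g x := by abel
  rw [hx] at key
  rw [real_inner_smul_right, real_inner_self_eq_norm_sq, norm_smul] at key
  have h1 := abs_le.1 key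
  have h0 := (hbd (x - L⁻¹ • gradient g x)).1
  have hMx := (hbd x).2
  have habs : ‖(L:ℝ)⁻¹‖ = L⁻¹ := by
    rw [Real.norm_eq_abs, abs_of_pos (by positivity)]
  rw [habs] at h1
  have hsq : ‖gradient g x‖ ^ 2 ≤ 2 * L * M := by
    have hLinv : (0:ℝ) < L⁻¹ := by positivity
    have hLL : L * L⁻¹ = 1 := mul_inv_cancel₀ hL.ne'
    set A := ‖gradient g x‖ with hA
    have e1 : L / 2 * (L⁻¹ * A) ^ 2 = L⁻¹ * A ^ 2 / 2 := by
      field_simp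
    have k3 : L⁻¹ * A ^ 2 ≤ 2 * g x := by nlinarith [h1.1, h0]
    have k4 : L * (L⁻¹ * A ^ 2) ≤ L * (2 * g x) :=
      mul_le_mul_of_nonneg_left k3 hL.le
    have k5 : L * (L⁻¹ * A ^ 2) = A ^ 2 := by
      rw [← mul_assoc, hLL, one_mul]
    nlinarith [mul_le_mul_of_nonneg_left hMx (le_of_lt hL)]
  calc ‖gradient g x‖ = Real.sqrt (‖gradient g x‖ ^ 2) := by
        rw [Real.sqrt_sq (norm_nonneg _)]
    _ ≤ Real.sqrt (2 * L * M) := Real.sqrt_le_sqrt hsq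

lemma lip_bound {p : ℕ} {L M : ℝ} (hL : 0 < L) (g : EuclideanSpace ℝ (Fin p) → ℝ)
    (hsm : LSmooth L g) (hbd : ∀ w, 0 ≤ g w ∧ g w ≤ M) (a b : EuclideanSpace ℝ (Fin p)) :
    g a - g b ≤ Real.sqrt (2 * L * M) * ‖a - b‖ := by
  have := convex_univ.norm_image_sub_le_of_norm_fderiv_le (f := g)
    (C := Real.sqrt (2 * L * M)) (fun x _ => hsm.1 x)
    (fun x _ => by rw [← grad_norm_eq]; exact grad_bound hL g hsm hbd x)
    (Set.mem_univ b) (Set.mem_univ a)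
  calc g a - g b ≤ ‖g a - g b‖ := le_abs_self _
    _ ≤ _ := this

lemma mix_aux {p : ℕ} (u v : EuclideanSpace ℝ (Fin p)) (t : ℝ) :
    ‖(1-t)•u + t•v‖^2 = (1-t)*‖u‖^2 + t*‖v‖^2 - t*(1-t)*‖u-v‖^2 := by
  rw [norm_add_sq_real, norm_sub_sq_real, norm_smul, norm_smul,
      real_inner_smul_left, real_inner_smul_right, mul_pow, mul_pow,
      Real.norm_eq_abs, Real.norm_eq_abs, sq_abs, sq_abs]
  ring

lemma mix_norm_sq {p : ℕ} (a b w₀ : EuclideanSpace ℝ (Fin p)) (t : ℝ) :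
    ‖((1-t)•a + t•b) - w₀‖^2 =
      (1-t)*‖a-w₀‖^2 + t*‖b-w₀‖^2 - t*(1-t)*‖a-b‖^2 := by
  have h : ((1-t)•a + t•b) - w₀ = (1-t)•(a - w₀) + t•(b - w₀) := by module
  have hab : a - b = (a - w₀) - (b - w₀) := by abel
  calc ‖((1-t)•a + t•b) - w₀‖^2
      = ‖(1-t)•(a - w₀) + t•(b - w₀)‖^2 := by rw [h]
    _ = (1-t)*‖a-w₀‖^2 + t*‖b-w₀‖^2 - t*(1-t)*‖(a-w₀)-(b-w₀)‖^2 := mix_aux _ _ _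
    _ = (1-t)*‖a-w₀‖^2 + t*‖b-w₀‖^2 - t*(1-t)*‖a-b‖^2 := by rw [← hab]

lemma cross_identity {p : ℕ} (ws ws' w₀ w₀' : EuclideanSpace ℝ (Fin p)) :
    ‖ws'-w₀‖^2 - ‖ws-w₀‖^2 + ‖ws-w₀'‖^2 - ‖ws'-w₀'‖^2 =
      2 * ⟪ws'-ws, w₀'-w₀⟫ := by
  simp only [norm_sub_sq_real, inner_sub_left, inner_sub_right]
  ring

lemma strong_min {p : ℕ} (W : Set (EuclideanSpace ℝ (Fin p))) (hW : Convex ℝ W)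
    (R : EuclideanSpace ℝ (Fin p) → ℝ)
    (hR : ∀ a ∈ W, ∀ b ∈ W, ∀ t : ℝ, 0 ≤ t → t ≤ 1 →
      R ((1-t)•a + t•b) ≤ (1-t)*R a + t*R b)
    (γ : ℝ) (hγ : 0 < γ) (w₀ ws : EuclideanSpace ℝ (Fin p)) (hws : ws ∈ W)
    (hmin : ∀ w ∈ W, R ws + γ/2*‖ws-w₀‖^2 ≤ R w + γ/2*‖w-w₀‖^2)
    (w : EuclideanSpace ℝ (Fin p)) (hw : w ∈ W) :
    R ws + γ/2*‖ws-w₀‖^2 + γ/2*‖w - ws‖^2 ≤ R w + γ/2*‖w-w₀‖^2 := by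
  set D2 := ‖w - ws‖^2 with hD2
  have hD2nn : 0 ≤ D2 := by positivity
  set c := γ/2 * D2 with hc0
  have hcnn : 0 ≤ c := by positivity
  refine le_of_forall_pos_le_add ?_
  intro ε hε
  set t := min (1/2 : ℝ) (ε / (c + 1)) with htdef
  have ht0 : 0 < t := lt_min (by norm_num) (by positivity)
  have ht1 : t ≤ 1 := le_trans (min_le_left _ _) (by norm_num)
  have hte : c * t ≤ ε := by
    have h1 : t ≤ ε / (c + 1) := min_le_right _ _
    have h2 : c * t ≤ c * (ε / (c + 1)) := mul_le_mul_of_nonneg_left h1 hcnn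
    have h3 : c * (ε / (c + 1)) ≤ ε := by
      rw [div_eq_mul_inv]
      have hcp : (0:ℝ) < c + 1 := by linarith
      rw [show c * (ε * (c+1)⁻¹) = ε * (c * (c+1)⁻¹) by ring]
      have : c * (c+1)⁻¹ ≤ 1 := by
        rw [mul_inv_le_iff₀ hcp]; linarith
      nlinarith [hε.le]
    linarith
  set wt := (1-t)•ws + t•w with hwt
  have hwtW : wt ∈ W := hW hws hw (by linarith) (by linarith) (by ring)
  have hM := hmin wt hwtW
  have hRc := hR ws hws w hw t ht0.le ht1
  have hmix := mix_norm_sq ws w w₀ t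
  have hrev : ‖ws - w‖^2 = D2 := by rw [hD2, norm_sub_rev]
  rw [hrev] at hmix
  set X := ‖ws - w₀‖^2
  set Y := ‖w - w₀‖^2
  have step : t * (R ws + γ/2*X + γ/2*(1-t)*D2) ≤ t * (R w + γ/2*Y) := by
    nlinarith [hM, hRc, hmix]
  have key : R ws + γ/2*X + γ/2*(1-t)*D2 ≤ R w + γ/2*Y :=
    le_of_mul_le_mul_left step ht0
  have hc1 : γ/2*(1-t)*D2 = c - c*t := by rw [hc0]; ring
  rw [hc1] at key
  linarith

theorem minibatch_prox_stability_expansion {p n : ℕ} (hn : 0 < n)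
    (W : Set (EuclideanSpace ℝ (Fin p))) (hW : Convex ℝ W)
    (L M γ : ℝ) (hL : 0 < L) (hM : 0 < M) (hγ : 0 < γ)
    (f f' : Fin n → EuclideanSpace ℝ (Fin p) → ℝ) (i : Fin n)
    (hdiff : ∀ j, j ≠ i → f' j = f j)
    (hconv : ∀ j, ConvexOn ℝ W (f j)) (hconv' : ConvexOn ℝ W (f' i))
    (hsm : ∀ j, LSmooth L (f j)) (hsm' : LSmooth L (f' i))
    (hbd : ∀ j w, 0 ≤ f j w ∧ f j w ≤ M) (hbd' : ∀ w, 0 ≤ f' i w ∧ f' i w ≤ M)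
    (r : EuclideanSpace ℝ (Fin p) → ℝ) (hr : ConvexOn ℝ W r)
    (w₀ w₀' ws ws' : EuclideanSpace ℝ (Fin p))
    (hw₀ : w₀ ∈ W) (hw₀' : w₀' ∈ W) (hws : ws ∈ W) (hws' : ws' ∈ W)
    (hmin : ∀ w ∈ W,
      ((1 / (n : ℝ)) * ∑ j, f j ws + r ws) + γ / 2 * ‖ws - w₀‖ ^ 2 ≤
      ((1 / (n : ℝ)) * ∑ j, f j w + r w) + γ / 2 * ‖w - w₀‖ ^ 2)
    (hmin' : ∀ w ∈ W,
      ((1 / (n : ℝ)) * ∑ j, f' j ws' + r ws') + γ / 2 * ‖ws' - w₀'‖ ^ 2 ≤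
      ((1 / (n : ℝ)) * ∑ j, f' j w + r w) + γ / 2 * ‖w - w₀'‖ ^ 2) :
    ‖ws - ws'‖ ≤ ‖w₀ - w₀'‖ + 4 * Real.sqrt (2 * L * M) / (n * γ) := by
  have hn' : (0:ℝ) < n := by exact_mod_cast hn
  set S := Real.sqrt (2 * L * M) with hS
  have hSnn : 0 ≤ S := Real.sqrt_nonneg _
  set D := ‖ws - ws'‖ with hD
  have hDnn : 0 ≤ D := norm_nonneg _
  set B := ‖w₀ - w₀'‖ with hB
  have hBnn : 0 ≤ B := norm_nonneg _
  -- convexity of the two empirical risks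
  have hconv'' : ∀ j, ConvexOn ℝ W (f' j) := by
    intro j
    rcases eq_or_ne j i with rfl | hj
    · exact hconv'
    · rw [hdiff j hj]; exact hconv j
  have hRconv : ∀ (g : Fin n → EuclideanSpace ℝ (Fin p) → ℝ),
      (∀ j, ConvexOn ℝ W (g j)) →
      ∀ a ∈ W, ∀ b ∈ W, ∀ t : ℝ, 0 ≤ t → t ≤ 1 →
        ((1/(n:ℝ)) * ∑ j, g j ((1-t)•a + t•b) + r ((1-t)•a + t•b)) ≤
          (1-t)*((1/(n:ℝ)) * ∑ j, g j a + r a) + t*((1/(n:ℝ)) * ∑ j, g j b + r b) := by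
    intro g hg a ha b hb t ht0 ht1
    have h1t : (0:ℝ) ≤ 1 - t := by linarith
    have hsum : ∑ j, g j ((1-t)•a + t•b) ≤ ∑ j, ((1-t) * g j a + t * g j b) :=
      Finset.sum_le_sum (fun j _ => (hg j).2 ha hb h1t ht0 (by ring))
    have hfs : (1/(n:ℝ)) * ∑ j, g j ((1-t)•a + t•b) ≤
        (1-t) * ((1/(n:ℝ)) * ∑ j, g j a) + t * ((1/(n:ℝ)) * ∑ j, g j b) := by
      calc (1/(n:ℝ)) * ∑ j, g j ((1-t)•a + t•b)
          ≤ (1/(n:ℝ)) * ∑ j, ((1-t) * g j a + t * g j b) :=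
            mul_le_mul_of_nonneg_left hsum (by positivity)
        _ = (1-t) * ((1/(n:ℝ)) * ∑ j, g j a) + t * ((1/(n:ℝ)) * ∑ j, g j b) := by
            rw [Finset.sum_add_distrib, ← Finset.mul_sum, ← Finset.mul_sum]; ring
    have hrc : r ((1-t)•a + t•b) ≤ (1-t) * r a + t * r b := by
      have := hr.2 ha hb h1t ht0 (by ring)
      simpa [smul_eq_mul] using this
    nlinarith [hfs, hrc]
  -- strong convexity inequalities
  have SC1 := strong_min W hW (fun w => (1/(n:ℝ)) * ∑ j, f j w + r w) (hRconv f hconv)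
    γ hγ w₀ ws hws hmin ws' hws'
  have SC2 := strong_min W hW (fun w => (1/(n:ℝ)) * ∑ j, f' j w + r w) (hRconv f' hconv'')
    γ hγ w₀' ws' hws' hmin' ws hws
  -- sum difference reduces to index i
  have hsd : ∀ x, ∑ j, f j x - ∑ j, f' j x = f i x - f' i x := by
    intro x
    rw [← Finset.sum_sub_distrib]
    exact Finset.sum_eq_single i (fun j _ hj => by rw [hdiff j hj]; ring)
      (fun h => absurd (Finset.mem_univ i) h)
  -- Lipschitz bounds
  have lip1 : f i ws' - f i ws ≤ S * D := by
    have := lip_bound hL (f i) (hsm i) (hbd i) ws' ws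
    rw [norm_sub_rev] at this
    exact this
  have lip2 : f' i ws - f' i ws' ≤ S * D := lip_bound hL (f' i) hsm' hbd' ws ws'
  -- cross term
  have hcross : ‖ws'-w₀‖^2 - ‖ws-w₀‖^2 + ‖ws-w₀'‖^2 - ‖ws'-w₀'‖^2 ≤ 2 * D * B := by
    rw [cross_identity]
    have h1 : ⟪ws'-ws, w₀'-w₀⟫ ≤ ‖ws'-ws‖ * ‖w₀'-w₀‖ := real_inner_le_norm _ _
    rw [norm_sub_rev ws' ws, norm_sub_rev w₀' w₀] at h1
    linarith
  -- combine
  have hrev1 : ‖ws' - ws‖^2 = D^2 := by rw [hD, norm_sub_rev]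
  rw [hrev1] at SC1
  have hdiffsum : ((1/(n:ℝ)) * ∑ j, f j ws' + r ws') - ((1/(n:ℝ)) * ∑ j, f j ws + r ws)
      + ((1/(n:ℝ)) * ∑ j, f' j ws + r ws) - ((1/(n:ℝ)) * ∑ j, f' j ws' + r ws')
      ≤ 2 * S * D / n := by
    have e1 := hsd ws'
    have e2 := hsd ws
    have hcomb : (f i ws' - f' i ws') - (f i ws - f' i ws) ≤ 2 * S * D := by linarith
    have : (1/(n:ℝ)) * ((f i ws' - f' i ws') - (f i ws - f' i ws)) ≤
        (1/(n:ℝ)) * (2 * S * D) := mul_le_mul_of_nonneg_left hcomb (by positivity)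
    calc ((1/(n:ℝ)) * ∑ j, f j ws' + r ws') - ((1/(n:ℝ)) * ∑ j, f j ws + r ws)
        + ((1/(n:ℝ)) * ∑ j, f' j ws + r ws) - ((1/(n:ℝ)) * ∑ j, f' j ws' + r ws')
        = (1/(n:ℝ)) * ((∑ j, f j ws' - ∑ j, f' j ws') - (∑ j, f j ws - ∑ j, f' j ws)) := by
          ring
      _ = (1/(n:ℝ)) * ((f i ws' - f' i ws') - (f i ws - f' i ws)) := by rw [e1, e2]
      _ ≤ (1/(n:ℝ)) * (2 * S * D) := this
      _ = 2 * S * D / n := by ring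
  have main : γ * D^2 ≤ γ * D * B + 2 * S * D / n := by nlinarith [SC1, SC2, hcross, hdiffsum]
  -- conclude
  rcases eq_or_lt_of_le hDnn with hD0 | hDpos
  · rw [← hD0]; positivity
  · have h1 : (γ * D) * D ≤ (γ * B + 2 * S / n) * D := by
      have e2 : (γ * D) * D = γ * D^2 := by ring
      have e3 : (γ * B + 2 * S / n) * D = γ * D * B + 2 * S * D / n := by ring
      rw [e2, e3]; exact main
    have hdiv : γ * D ≤ γ * B + 2 * S / n := le_of_mul_le_mul_right h1 hDpos
    have hkey : γ * (B + 4 * S / (n * γ)) = γ * B + 4 * S / n := by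
      field_simp
    have hhalf : 2 * S / n ≤ 4 * S / n := by
      have h4 : 0 ≤ 2 * S / n := by positivity
      have : (4:ℝ) * S / n = 2 * S / n + 2 * S / n := by ring
      linarith
    have h2 : γ * D ≤ γ * (B + 4 * S / (n * γ)) := by
      rw [hkey]; linarith
    exact le_of_mul_le_mul_left h2 hγ
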